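/- arXiv:2105.01184 — 2 statements merged into one kernel-verified Lean document; each statement's English description precedes it below -/
import Mathlib

section
/- For every realization of the 2^2 split-plot assignment, with 1̂_ht = diag(1̂_ht(z))_{z∈T} and rows/columns ordered (0,0),(0,1),(1,0),(1,1): the cluster-robust covariance of the 'wls' unit regression satisfies Ṽ_wls = 1̂_ht^{-1}·diag(((W_0−1)/W_0)·I_2, ((W_1−1)/W_1)·I_2)·V̂_haj·1̂_ht^{-1}, and the cluster-robust covariance of the 'ag' aggregate regression satisfies Ṽ_ag = diag(((W_0−1)/W_0)·I_2, ((W_1−1)/W_1)·I_2)·V̂_ht. -/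
open Finset Matrix Filter
open scoped Classical BigOperators

noncomputable section

namespace SplitPlotPaper

/-- The set of treatment combinations `T = {0,1} × {0,1}`, a pair of the levels of
factor A and factor B. -/
abbrev T : Type := Bool × Bool

section LS

variable {ι κ γ : Type*} [Fintype ι] [Fintype κ] [DecidableEq κ] [Fintype γ] [DecidableEq γ]

/-- The Gram matrix `Dᵀ Π D` of a (weighted) least-squares problem with design matrix `X`
and weights `π`. -/
def gram (X : Matrix ι κ ℝ) (π : ι → ℝ) : Matrix κ κ ℝ :=
  Matrix.of fun k k' => ∑ i, π i * X i k * X i k'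

/-- The (weighted) least-squares coefficient vector `(DᵀΠD)⁻¹ DᵀΠY`. -/
def lsCoef (X : Matrix ι κ ℝ) (π y : ι → ℝ) : κ → ℝ :=
  (gram X π)⁻¹.mulVec fun k => ∑ i, π i * X i k * y i

/-- Residuals of the (weighted) least-squares fit. -/
def lsResid (X : Matrix ι κ ℝ) (π y : ι → ℝ) (i : ι) : ℝ :=
  y i - ∑ k, X i k * lsCoef X π y k

/-- The cluster-robust covariance matrix
`(DᵀΠD)⁻¹ (Σ_c D_cᵀΠ_c e_c e_cᵀ Π_c D_c) (DᵀΠD)⁻¹` for clustering map `c`. -/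
def clusterCov (X : Matrix ι κ ℝ) (π y : ι → ℝ) (c : ι → γ) : Matrix κ κ ℝ :=
  (gram X π)⁻¹ *
    (Matrix.of fun k k' =>
      ∑ g : γ, (∑ i, if c i = g then π i * X i k * lsResid X π y i else 0) *
        (∑ i, if c i = g then π i * X i k' * lsResid X π y i else 0)) *
    (gram X π)⁻¹

/-- The heteroskedasticity-robust (sandwich) covariance matrix. -/
def hcCov (X : Matrix ι κ ℝ) (π y : ι → ℝ) : Matrix κ κ ℝ :=
  (gram X π)⁻¹ *
    (Matrix.of fun k k' => ∑ i, (π i) ^ 2 * (lsResid X π y i) ^ 2 * X i k * X i k') *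
    (gram X π)⁻¹

end LS

/-- A `2²` split-plot design: `W = W0 + W1` whole-plots, whole-plot `w` containing
`M w = M0 w + M1 w` sub-plots, together with fixed potential outcomes `Y`. -/
structure Design where
  W0 : ℕ
  W1 : ℕ
  hW0 : 2 ≤ W0
  hW1 : 2 ≤ W1
  M0 : Fin (W0 + W1) → ℕ
  M1 : Fin (W0 + W1) → ℕ
  hM0 : ∀ w, 2 ≤ M0 w
  hM1 : ∀ w, 2 ≤ M1 w
  Y : (w : Fin (W0 + W1)) → Fin (M0 w + M1 w) → T → ℝ

namespace Design

variable (d : Design)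

/-- Number of whole-plots. -/
abbrev W : ℕ := d.W0 + d.W1

/-- Size of whole-plot `w`. -/
abbrev M (w : Fin d.W) : ℕ := d.M0 w + d.M1 w

/-- Total number of units. -/
def N : ℕ := ∑ w, d.M w

/-- Number of whole-plots assigned level `a` of factor A. -/
def Wa (a : Bool) : ℕ := if a then d.W1 else d.W0

/-- Number of units of whole-plot `w` assigned level `b` of factor B. -/
def Mb (w : Fin d.W) (b : Bool) : ℕ := if b then d.M1 w else d.M0 w

/-- `p_a = W_a / W`. -/
def p (a : Bool) : ℝ := (d.Wa a : ℝ) / (d.W : ℝ)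

/-- `q_{wb} = M_{wb} / M_w`. -/
def q (w : Fin d.W) (b : Bool) : ℝ := (d.Mb w b : ℝ) / (d.M w : ℝ)

/-- Inclusion probability `p_{ws}(z) = p_a q_{wb}` for `z = (a,b)`. -/
def prob (w : Fin d.W) (z : T) : ℝ := d.p z.1 * d.q w z.2

/-- Whole-plot size factor `α_w = W M_w / N`. -/
def alpha (w : Fin d.W) : ℝ := (d.W : ℝ) * (d.M w : ℝ) / (d.N : ℝ)

/-- An assignment: a level of factor A for each whole-plot and a level of factor B
for each unit. -/
abbrev Assign : Type := (Fin d.W → Bool) × ((w : Fin d.W) → Fin (d.M w) → Bool)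

/-- The set of assignments realizable under split-plot randomization: exactly `W1`
whole-plots receive level 1 of factor A, and exactly `M1 w` units of whole-plot `w`
receive level 1 of factor B.  Split-plot randomization is uniform on this set. -/
def Ω : Finset d.Assign :=
  Finset.univ.filter fun ω =>
    ((Finset.univ.filter fun w => ω.1 w = true).card = d.W1) ∧
    (∀ w, (Finset.univ.filter fun s => ω.2 w s = true).card = d.M1 w)

/-- Design-based expectation: average over the uniform distribution on `Ω`. -/
def expect (f : d.Assign → ℝ) : ℝ := (∑ ω ∈ d.Ω, f ω) / (d.Ω.card : ℝ)

/-- Design-based covariance. -/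
def cov (f g : d.Assign → ℝ) : ℝ :=
  d.expect (fun ω => f ω * g ω) - d.expect f * d.expect g

/-- Conditional expectation given an event `E` on assignments. -/
def cexpect (E : d.Assign → Prop) (f : d.Assign → ℝ) : ℝ :=
  (∑ ω ∈ d.Ω.filter E, f ω) / ((d.Ω.filter E).card : ℝ)

/-- Conditional covariance given an event `E` on assignments. -/
def ccov (E : d.Assign → Prop) (f g : d.Assign → ℝ) : ℝ :=
  d.cexpect E (fun ω => f ω * g ω) - d.cexpect E f * d.cexpect E g

/-- Treatment `Z_{ws} = (A_w, B_{ws})` received by unit `(w,s)`. -/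
def Z (ω : d.Assign) (w : Fin d.W) (s : Fin (d.M w)) : T := (ω.1 w, ω.2 w s)

/-- Observed outcome `Y_{ws} = Y_{ws}(Z_{ws})`. -/
def Yobs (ω : d.Assign) (w : Fin d.W) (s : Fin (d.M w)) : ℝ := d.Y w s (d.Z ω w s)

/-- Horvitz–Thompson estimator `Ŷ_ht(z)`. -/
def Yht (ω : d.Assign) (z : T) : ℝ :=
  (d.N : ℝ)⁻¹ * ∑ w, ∑ s, if d.Z ω w s = z then (d.prob w z)⁻¹ * d.Yobs ω w s else 0

/-- `1̂_ht(z)`: the Horvitz–Thompson estimator of the constant 1. -/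
def oneHt (ω : d.Assign) (z : T) : ℝ :=
  (d.N : ℝ)⁻¹ * ∑ w, ∑ s, if d.Z ω w s = z then (d.prob w z)⁻¹ else 0

/-- Hajek estimator `Ŷ_haj(z) = Ŷ_ht(z)/1̂_ht(z)`. -/
def Yhaj (ω : d.Assign) (z : T) : ℝ := d.Yht ω z / d.oneHt ω z

/-- Sample-mean estimator `Ŷ_sm(z)`. -/
def Ysm (ω : d.Assign) (z : T) : ℝ :=
  (∑ w, ∑ s, if d.Z ω w s = z then d.Yobs ω w s else 0) /
    (∑ w, ∑ s, if d.Z ω w s = z then (1 : ℝ) else 0)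

/-- Whole-plot sample mean `Ŷ_w(z)` (zero when whole-plot `w` has no units under `z`). -/
def Yw (ω : d.Assign) (w : Fin d.W) (z : T) : ℝ :=
  (d.Mb w z.2 : ℝ)⁻¹ * ∑ s, if d.Z ω w s = z then d.Yobs ω w s else 0

/-- Scaled whole-plot sample mean `Û_w(z) = α_w Ŷ_w(z)`. -/
def Uw (ω : d.Assign) (w : Fin d.W) (z : T) : ℝ := d.alpha w * d.Yw ω w z

/-- Finite-population average `Ȳ(z)`. -/
def Ybar (z : T) : ℝ := (d.N : ℝ)⁻¹ * ∑ w, ∑ s, d.Y w s z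

/-- Whole-plot average potential outcome `Ȳ_w(z)`. -/
def Ybarw (w : Fin d.W) (z : T) : ℝ := (d.M w : ℝ)⁻¹ * ∑ s, d.Y w s z

/-- Scaled whole-plot total `U_w(z) = α_w Ȳ_w(z)`. -/
def U (w : Fin d.W) (z : T) : ℝ := d.alpha w * d.Ybarw w z

/-- Between whole-plot covariance `S_ht(z,z')`. -/
def Sht (z z' : T) : ℝ :=
  ((d.W : ℝ) - 1)⁻¹ *
    ∑ w, (d.alpha w * d.Ybarw w z - d.Ybar z) * (d.alpha w * d.Ybarw w z' - d.Ybar z')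

/-- Between whole-plot covariance `S_haj(z,z')`. -/
def Shaj (z z' : T) : ℝ :=
  ((d.W : ℝ) - 1)⁻¹ *
    ∑ w, (d.alpha w) ^ 2 * (d.Ybarw w z - d.Ybar z) * (d.Ybarw w z' - d.Ybar z')

/-- Within whole-plot covariance `S_w(z,z')`. -/
def Sw (w : Fin d.W) (z z' : T) : ℝ :=
  ((d.M w : ℝ) - 1)⁻¹ * (d.alpha w) ^ 2 *
    ∑ s, (d.Y w s z - d.Ybarw w z) * (d.Y w s z' - d.Ybarw w z')

/-- Entry `(z,z')` of `H = diag(p₀⁻¹,p₁⁻¹) ⊗ J₂ − J₄`. -/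
def Hmat (z z' : T) : ℝ := (if z.1 = z'.1 then (d.p z.1)⁻¹ else 0) - 1

/-- Entry `(z,z')` of `H_w = diag(p₀⁻¹,p₁⁻¹) ⊗ (diag(q_{w0}⁻¹,q_{w1}⁻¹) − J₂)`,
i.e. `1(a=a')·p_a⁻¹·(q_{wb}⁻¹·1(z=z') − 1)`. -/
def Hw (w : Fin d.W) (z z' : T) : ℝ :=
  if z.1 = z'.1 then (d.p z.1)⁻¹ * ((if z = z' then (d.q w z.2)⁻¹ else 0) - 1) else 0

/-- `Ψ(z,z') = W⁻¹ Σ_w M_w⁻¹ H_w(z,z') S_w(z,z')`. -/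
def Psi (z z' : T) : ℝ := (d.W : ℝ)⁻¹ * ∑ w, (d.M w : ℝ)⁻¹ * d.Hw w z z' * d.Sw w z z'

/-- Sample analog `Ŝ_ht(z,z')` (for `z,z'` sharing the same A-level `z.1`). -/
def ShtHat (ω : d.Assign) (z z' : T) : ℝ :=
  ((d.Wa z.1 : ℝ) - 1)⁻¹ *
    ∑ w, if ω.1 w = z.1 then
        (d.alpha w * d.Yw ω w z - d.Yht ω z) * (d.alpha w * d.Yw ω w z' - d.Yht ω z')
      else 0

/-- Sample analog `Ŝ_haj(z,z')` (for `z,z'` sharing the same A-level `z.1`). -/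
def ShajHat (ω : d.Assign) (z z' : T) : ℝ :=
  ((d.Wa z.1 : ℝ) - 1)⁻¹ *
    ∑ w, if ω.1 w = z.1 then
        (d.alpha w) ^ 2 * (d.Yw ω w z - d.Yhaj ω z) * (d.Yw ω w z' - d.Yhaj ω z')
      else 0

/-- Covariance estimator `V̂_ht` (block-diagonal in the A-levels). -/
def Vht (ω : d.Assign) : Matrix T T ℝ :=
  Matrix.of fun z z' => if z.1 = z'.1 then (d.Wa z.1 : ℝ)⁻¹ * d.ShtHat ω z z' else 0

/-- Covariance estimator `V̂_haj` (block-diagonal in the A-levels). -/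
def Vhaj (ω : d.Assign) : Matrix T T ℝ :=
  Matrix.of fun z z' => if z.1 = z'.1 then (d.Wa z.1 : ℝ)⁻¹ * d.ShajHat ω z z' else 0

/-- Index set of units. -/
abbrev Idx : Type := (w : Fin d.W) × Fin (d.M w)

/-- Design matrix of the unit regression on the four treatment indicators. -/
def Dunit (ω : d.Assign) : Matrix d.Idx T ℝ :=
  Matrix.of fun i z => if d.Z ω i.1 i.2 = z then 1 else 0

/-- Observed outcome vector, indexed by units. -/
def Yv (ω : d.Assign) : d.Idx → ℝ := fun i => d.Yobs ω i.1 i.2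

/-- Inverse-probability weights `p_{ws}(Z_{ws})⁻¹`. -/
def wgt (ω : d.Assign) : d.Idx → ℝ := fun i => (d.prob i.1 (d.Z ω i.1 i.2))⁻¹

/-- Index set of the aggregate regression: pairs `(w,b)`. -/
abbrev AgIdx : Type := Fin d.W × Bool

/-- Design matrix of the aggregate regression on the four treatment indicators. -/
def Dag (ω : d.Assign) : Matrix d.AgIdx T ℝ :=
  Matrix.of fun i z => if (ω.1 i.1, i.2) = z then 1 else 0

/-- Outcome vector of the aggregate regression: `Û_w((A_w, b))`. -/
def Uag (ω : d.Assign) : d.AgIdx → ℝ := fun i => d.Uw ω i.1 (ω.1 i.1, i.2)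

/-- Clustering of units by whole-plot. -/
def clUnit : d.Idx → Fin d.W := fun i => i.1

/-- Clustering of aggregate observations by whole-plot. -/
def clAg : d.AgIdx → Fin d.W := fun i => i.1

/-- OLS coefficients `β_ols` of the unit regression. -/
def betaOls (ω : d.Assign) : T → ℝ := lsCoef (d.Dunit ω) (fun _ => 1) (d.Yv ω)

/-- WLS coefficients `β_wls` of the unit regression with inverse probability weights. -/
def betaWls (ω : d.Assign) : T → ℝ := lsCoef (d.Dunit ω) (d.wgt ω) (d.Yv ω)

/-- OLS coefficients `β_ag` of the aggregate regression. -/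
def betaAg (ω : d.Assign) : T → ℝ := lsCoef (d.Dag ω) (fun _ => 1) (d.Uag ω)

/-- Cluster-robust covariance `Ṽ_ols` of the unweighted unit regression. -/
def Vols (ω : d.Assign) : Matrix T T ℝ :=
  clusterCov (d.Dunit ω) (fun _ => 1) (d.Yv ω) d.clUnit

/-- Cluster-robust covariance `Ṽ_wls` of the weighted unit regression. -/
def Vwls (ω : d.Assign) : Matrix T T ℝ :=
  clusterCov (d.Dunit ω) (d.wgt ω) (d.Yv ω) d.clUnit

/-- Cluster-robust covariance `Ṽ_ag` of the aggregate regression. -/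
def VagCR (ω : d.Assign) : Matrix T T ℝ :=
  clusterCov (d.Dag ω) (fun _ => 1) (d.Uag ω) d.clAg

section Covariates

variable {J : ℕ}

/-- Horvitz–Thompson estimator of the covariate means. -/
def xht (x : (w : Fin d.W) → Fin (d.M w) → Fin J → ℝ) (ω : d.Assign) (z : T) (j : Fin J) : ℝ :=
  (d.N : ℝ)⁻¹ * ∑ w, ∑ s, if d.Z ω w s = z then (d.prob w z)⁻¹ * x w s j else 0

/-- Hajek estimator of the covariate means. -/
def xhaj (x : (w : Fin d.W) → Fin (d.M w) → Fin J → ℝ) (ω : d.Assign) (z : T) (j : Fin J) : ℝ :=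
  d.xht x ω z j / d.oneHt ω z

/-- Sample-mean estimator of the covariate means. -/
def xsm (x : (w : Fin d.W) → Fin (d.M w) → Fin J → ℝ) (ω : d.Assign) (z : T) (j : Fin J) : ℝ :=
  (∑ w, ∑ s, if d.Z ω w s = z then x w s j else 0) /
    (∑ w, ∑ s, if d.Z ω w s = z then (1 : ℝ) else 0)

/-- Whole-plot sample mean of the covariates `x̂_w(z)`. -/
def xw (x : (w : Fin d.W) → Fin (d.M w) → Fin J → ℝ) (ω : d.Assign) (w : Fin d.W) (z : T)
    (j : Fin J) : ℝ :=
  (d.Mb w z.2 : ℝ)⁻¹ * ∑ s, if d.Z ω w s = z then x w s j else 0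

/-- Scaled whole-plot covariate total `v̂_w(z) = α_w x̂_w(z)`. -/
def vw (x : (w : Fin d.W) → Fin (d.M w) → Fin J → ℝ) (ω : d.Assign) (w : Fin d.W) (z : T)
    (j : Fin J) : ℝ :=
  d.alpha w * d.xw x ω w z j

/-- Design matrix of the additive covariate-adjusted unit regression. -/
def DunitF (x : (w : Fin d.W) → Fin (d.M w) → Fin J → ℝ) (ω : d.Assign) :
    Matrix d.Idx (T ⊕ Fin J) ℝ :=
  Matrix.of fun i k =>
    Sum.elim (fun z => if d.Z ω i.1 i.2 = z then (1 : ℝ) else 0) (fun j => x i.1 i.2 j) k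

/-- Design matrix of the additive covariate-adjusted aggregate regression. -/
def DagF (x : (w : Fin d.W) → Fin (d.M w) → Fin J → ℝ) (ω : d.Assign) :
    Matrix d.AgIdx (T ⊕ Fin J) ℝ :=
  Matrix.of fun i k =>
    Sum.elim (fun z => if (ω.1 i.1, i.2) = z then (1 : ℝ) else 0)
      (fun j => d.vw x ω i.1 (ω.1 i.1, i.2) j) k

/-- Design matrix of the fully-interacted covariate-adjusted unit regression. -/
def DunitL (x : (w : Fin d.W) → Fin (d.M w) → Fin J → ℝ) (ω : d.Assign) :
    Matrix d.Idx (T ⊕ T × Fin J) ℝ :=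
  Matrix.of fun i k =>
    Sum.elim (fun z => if d.Z ω i.1 i.2 = z then (1 : ℝ) else 0)
      (fun zj => if d.Z ω i.1 i.2 = zj.1 then x i.1 i.2 zj.2 else 0) k

/-- Design matrix of the fully-interacted covariate-adjusted aggregate regression. -/
def DagL (x : (w : Fin d.W) → Fin (d.M w) → Fin J → ℝ) (ω : d.Assign) :
    Matrix d.AgIdx (T ⊕ T × Fin J) ℝ :=
  Matrix.of fun i k =>
    Sum.elim (fun z => if (ω.1 i.1, i.2) = z then (1 : ℝ) else 0)
      (fun zj => if (ω.1 i.1, i.2) = zj.1 then d.vw x ω i.1 (ω.1 i.1, i.2) zj.2 else 0) k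

end Covariates

/-- Centered factor-A indicator `A_w − 1/2`. -/
def Ac (ω : d.Assign) (w : Fin d.W) : ℝ := (if ω.1 w then 1 else 0) - 1 / 2

/-- Centered factor-B indicator `B_{ws} − 1/2`. -/
def Bcu (ω : d.Assign) (i : d.Idx) : ℝ := (if ω.2 i.1 i.2 then 1 else 0) - 1 / 2

/-- Design matrix of the factor-based unit regression
`Y ~ 1 + (A−1/2) + (B−1/2) + (A−1/2)(B−1/2)`. -/
def Funit (ω : d.Assign) : Matrix d.Idx (Fin 4) ℝ :=
  Matrix.of fun i => ![1, d.Ac ω i.1, d.Bcu ω i, d.Ac ω i.1 * d.Bcu ω i]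

/-- Design matrix of the factor-based aggregate regression
`Û ~ 1 + (A−1/2) + (b−1/2) + (A−1/2)(b−1/2)`. -/
def Fag (ω : d.Assign) : Matrix d.AgIdx (Fin 4) ℝ :=
  Matrix.of fun i =>
    ![1, d.Ac ω i.1, (if i.2 then 1 else 0) - 1 / 2,
      d.Ac ω i.1 * ((if i.2 then 1 else 0) - 1 / 2)]

end Design

/-- The contrast matrix `G₀` with rows `g_A`, `g_B`, `g_AB`. -/
def G0 : Matrix (Fin 3) T ℝ :=
  Matrix.of fun k z =>
    ![(if z.1 then (1 : ℝ) else -1) / 2,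
      (if z.2 then (1 : ℝ) else -1) / 2,
      (if z.1 then (-1 : ℝ) else 1) * (if z.2 then (-1 : ℝ) else 1)] k


namespace Design

variable (d : Design)

lemma W_pos : 0 < d.W := by have := d.hW0; have := d.hW1; show 0 < d.W0 + d.W1; omega

lemma N_pos : 0 < d.N := by
  refine Finset.sum_pos (fun w _ => ?_) ⟨⟨0, d.W_pos⟩, Finset.mem_univ _⟩
  have := d.hM0 w; have := d.hM1 w; show 0 < d.M0 w + d.M1 w; omega

lemma W_ne : (d.W : ℝ) ≠ 0 := Nat.cast_ne_zero.mpr d.W_pos.ne'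
lemma N_ne : (d.N : ℝ) ≠ 0 := Nat.cast_ne_zero.mpr d.N_pos.ne'
lemma M_ne (w : Fin d.W) : (d.M w : ℝ) ≠ 0 := by
  have := d.hM0 w; have := d.hM1 w
  exact Nat.cast_ne_zero.mpr (show d.M0 w + d.M1 w ≠ 0 by omega)
lemma Mb_ne (w : Fin d.W) (b : Bool) : (d.Mb w b : ℝ) ≠ 0 := by
  have := d.hM0 w; have := d.hM1 w
  exact Nat.cast_ne_zero.mpr (by cases b <;> simp [Mb] <;> omega)
lemma Wa_pos (a : Bool) : 0 < d.Wa a := by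
  have := d.hW0; have := d.hW1; cases a <;> simp [Wa] <;> omega
lemma Wa_ne (a : Bool) : (d.Wa a : ℝ) ≠ 0 := Nat.cast_ne_zero.mpr (d.Wa_pos a).ne'
lemma Wa_sub_one_ne (a : Bool) : (d.Wa a : ℝ) - 1 ≠ 0 := by
  have h : 2 ≤ d.Wa a := by have := d.hW0; have := d.hW1; cases a <;> simpa [Wa]
  have : (2 : ℝ) ≤ (d.Wa a : ℝ) := by exact_mod_cast h
  linarith
lemma p_ne (a : Bool) : d.p a ≠ 0 := div_ne_zero (d.Wa_ne a) d.W_ne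
lemma q_ne (w : Fin d.W) (b : Bool) : d.q w b ≠ 0 := div_ne_zero (d.Mb_ne w b) (d.M_ne w)
lemma prob_ne (w : Fin d.W) (z : T) : d.prob w z ≠ 0 :=
  mul_ne_zero (d.p_ne z.1) (d.q_ne w z.2)

variable {ω : d.Assign}

lemma cardA (hω : ω ∈ d.Ω) (a : Bool) :
    (Finset.univ.filter fun w => ω.1 w = a).card = d.Wa a := by
  simp only [Ω, Finset.mem_filter, Finset.mem_univ, true_and] at hω
  cases a
  · have h2 := Finset.card_filter_add_card_filter_not
      (s := (Finset.univ : Finset (Fin d.W))) (p := fun w => ω.1 w = true)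
    have h3 : (Finset.univ.filter fun w => ¬ ω.1 w = true) =
        (Finset.univ.filter fun w => ω.1 w = false) :=
      Finset.filter_congr (fun w _ => by cases ω.1 w <;> simp)
    rw [h3, hω.1, Finset.card_univ, Fintype.card_fin] at h2
    simp only [Wa, if_false, Bool.false_eq_true]
    have hW : d.W = d.W0 + d.W1 := rfl
    omega
  · simpa [Wa] using hω.1

lemma cardB (hω : ω ∈ d.Ω) (w : Fin d.W) (b : Bool) :
    (Finset.univ.filter fun s => ω.2 w s = b).card = d.Mb w b := by
  simp only [Ω, Finset.mem_filter, Finset.mem_univ, true_and] at hω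
  cases b
  · have h2 := Finset.card_filter_add_card_filter_not
      (s := (Finset.univ : Finset (Fin (d.M w)))) (p := fun s => ω.2 w s = true)
    have h3 : (Finset.univ.filter fun s => ¬ ω.2 w s = true) =
        (Finset.univ.filter fun s => ω.2 w s = false) :=
      Finset.filter_congr (fun s _ => by cases ω.2 w s <;> simp)
    rw [h3, hω.2 w, Finset.card_univ, Fintype.card_fin] at h2
    simp only [Mb, if_false, Bool.false_eq_true]
    have hM : d.M w = d.M0 w + d.M1 w := rfl
    omega
  · simpa [Mb] using hω.2 w

lemma sum_indB (hω : ω ∈ d.Ω) (w : Fin d.W) (b : Bool) :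
    (∑ s, if ω.2 w s = b then (1 : ℝ) else 0) = (d.Mb w b : ℝ) := by
  rw [Finset.sum_boole]
  norm_cast
  exact d.cardB hω w b

lemma sum_Z (w : Fin d.W) (z : T) (f : Fin (d.M w) → ℝ) :
    (∑ s, if d.Z ω w s = z then f s else 0) =
      if ω.1 w = z.1 then ∑ s, if ω.2 w s = z.2 then f s else 0 else 0 := by
  by_cases h : ω.1 w = z.1
  · rw [if_pos h]
    refine Finset.sum_congr rfl fun s _ => ?_
    simp [Z, Prod.ext_iff, h]
  · rw [if_neg h, Finset.sum_eq_zero]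
    intro s _
    rw [if_neg]
    simp [Z, Prod.ext_iff, h]

lemma count_Z (hω : ω ∈ d.Ω) (w : Fin d.W) (z : T) :
    (∑ s, if d.Z ω w s = z then (1 : ℝ) else 0) =
      if ω.1 w = z.1 then (d.Mb w z.2 : ℝ) else 0 := by
  rw [d.sum_Z]
  split_ifs
  · exact d.sum_indB hω w z.2
  · rfl

lemma sumY_Z (w : Fin d.W) (z : T) :
    (∑ s, if d.Z ω w s = z then d.Yobs ω w s else 0) = (d.Mb w z.2 : ℝ) * d.Yw ω w z := by
  rw [Yw, ← mul_assoc, mul_inv_cancel₀ (d.Mb_ne w z.2), one_mul]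

lemma Yw_zero {w : Fin d.W} {z : T} (h : ¬ ω.1 w = z.1) : d.Yw ω w z = 0 := by
  rw [Yw, d.sum_Z, if_neg h, mul_zero]

lemma prob_inv_Mb (w : Fin d.W) (z : T) :
    (d.prob w z)⁻¹ * (d.Mb w z.2 : ℝ) = (d.p z.1)⁻¹ * (d.M w : ℝ) := by
  have h1 := d.p_ne z.1
  have h2 := d.Mb_ne w z.2
  have h3 := d.M_ne w
  rw [prob, q]
  field_simp

lemma oneHt_eq (hω : ω ∈ d.Ω) (z : T) :
    d.oneHt ω z =
      (d.N : ℝ)⁻¹ * ∑ w, if ω.1 w = z.1 then (d.p z.1)⁻¹ * (d.M w : ℝ) else 0 := by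
  rw [oneHt]
  congr 1
  refine Finset.sum_congr rfl fun w _ => ?_
  have h1 : ∀ s, (if d.Z ω w s = z then (d.prob w z)⁻¹ else 0) =
      (d.prob w z)⁻¹ * (if d.Z ω w s = z then (1:ℝ) else 0) := by
    intro s; split_ifs <;> simp
  rw [Finset.sum_congr rfl fun s _ => h1 s, ← Finset.mul_sum, d.count_Z hω]
  split_ifs
  · exact d.prob_inv_Mb w z
  · exact mul_zero _

lemma p_pos (a : Bool) : 0 < d.p a :=
  div_pos (by exact_mod_cast d.Wa_pos a) (by exact_mod_cast d.W_pos)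

lemma M_cast_pos (w : Fin d.W) : (0 : ℝ) < (d.M w : ℝ) :=
  lt_of_le_of_ne (by positivity) (Ne.symm (d.M_ne w))

lemma oneHt_pos (hω : ω ∈ d.Ω) (z : T) : 0 < d.oneHt ω z := by
  rw [d.oneHt_eq hω z, ← Finset.sum_filter]
  refine mul_pos (inv_pos.mpr (by exact_mod_cast d.N_pos)) (Finset.sum_pos (fun w _ => ?_) ?_)
  · exact mul_pos (inv_pos.mpr (d.p_pos z.1)) (d.M_cast_pos w)
  · rw [← Finset.card_pos, d.cardA hω z.1]
    exact d.Wa_pos z.1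

lemma oneHt_ne (hω : ω ∈ d.Ω) (z : T) : d.oneHt ω z ≠ 0 := (d.oneHt_pos hω z).ne'

lemma Yht_eq (z : T) :
    d.Yht ω z =
      (d.N : ℝ)⁻¹ * ∑ w, if ω.1 w = z.1 then (d.p z.1)⁻¹ * ((d.M w : ℝ) * d.Yw ω w z) else 0 := by
  rw [Yht]
  congr 1
  refine Finset.sum_congr rfl fun w _ => ?_
  have h1 : ∀ s, (if d.Z ω w s = z then (d.prob w z)⁻¹ * d.Yobs ω w s else 0) =
      (d.prob w z)⁻¹ * (if d.Z ω w s = z then d.Yobs ω w s else 0) := by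
    intro s; split_ifs <;> simp
  rw [Finset.sum_congr rfl fun s _ => h1 s, ← Finset.mul_sum, d.sumY_Z]
  by_cases h : ω.1 w = z.1
  · rw [if_pos h, ← mul_assoc, d.prob_inv_Mb, mul_assoc]
  · rw [if_neg h, d.Yw_zero h, mul_zero, mul_zero]

lemma sum_idx (f : d.Idx → ℝ) : ∑ i : d.Idx, f i = ∑ w, ∑ s, f ⟨w, s⟩ := by
  rw [← Finset.univ_sigma_univ, Finset.sum_sigma]

lemma sum_idx_cluster (w : Fin d.W) (f : d.Idx → ℝ) :
    (∑ i : d.Idx, if i.1 = w then f i else 0) = ∑ s, f ⟨w, s⟩ := by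
  rw [d.sum_idx fun i => if i.1 = w then f i else 0, Finset.sum_eq_single w]
  · exact Finset.sum_congr rfl fun s _ => if_pos rfl
  · exact fun w' _ hne => Finset.sum_eq_zero fun s _ => if_neg hne
  · exact fun h => absurd (Finset.mem_univ w) h

lemma sum_ag_cluster (w : Fin d.W) (f : d.AgIdx → ℝ) :
    (∑ i : d.AgIdx, if i.1 = w then f i else 0) = ∑ b, f (w, b) := by
  rw [Fintype.sum_prod_type, Finset.sum_eq_single w]
  · exact Finset.sum_congr rfl fun b _ => if_pos rfl
  · exact fun w' _ hne => Finset.sum_eq_zero fun b _ => if_neg hne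
  · exact fun h => absurd (Finset.mem_univ w) h

lemma bool_collapse (A : Bool) (z : T) (r : ℝ) :
    (∑ b : Bool, if (A, b) = z then r else 0) = if A = z.1 then r else 0 := by
  rcases z with ⟨a, b⟩
  rw [Fintype.sum_bool]
  cases b <;> cases a <;> cases A <;> simp [Prod.ext_iff]

lemma diag_inv (v : T → ℝ) (hv : ∀ z, v z ≠ 0) :
    (Matrix.diagonal v)⁻¹ = Matrix.diagonal fun z => (v z)⁻¹ := by
  refine Matrix.inv_eq_right_inv ?_
  rw [Matrix.diagonal_mul_diagonal]
  ext i j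
  rcases eq_or_ne i j with rfl | h
  · simp [mul_inv_cancel₀ (hv i)]
  · simp [Matrix.diagonal_apply_ne _ h, Matrix.one_apply_ne h]

lemma gram_wls (hω : ω ∈ d.Ω) :
    gram (d.Dunit ω) (d.wgt ω) = Matrix.diagonal fun z : T => (d.N : ℝ) * d.oneHt ω z := by
  ext z z'
  simp only [gram, Matrix.of_apply, Matrix.diagonal_apply]
  rw [d.sum_idx]
  by_cases h : z = z'
  · subst h
    rw [if_pos rfl, oneHt, ← mul_assoc, mul_inv_cancel₀ d.N_ne, one_mul]
    refine Finset.sum_congr rfl fun w _ => Finset.sum_congr rfl fun s _ => ?_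
    simp only [Dunit, wgt, Matrix.of_apply]
    split_ifs with hz
    · rw [hz]; ring
    · ring
  · rw [if_neg h, Finset.sum_eq_zero]
    intro w _
    refine Finset.sum_eq_zero fun s _ => ?_
    simp only [Dunit, Matrix.of_apply]
    split_ifs with h1 h2
    · exact absurd (h1.symm.trans h2) h
    all_goals ring

lemma betaWls_eq (hω : ω ∈ d.Ω) : d.betaWls ω = d.Yhaj ω := by
  funext z
  rw [betaWls, lsCoef, d.gram_wls hω,
    diag_inv _ (fun z => mul_ne_zero d.N_ne (d.oneHt_ne hω z)), Matrix.mulVec_diagonal]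
  have hsum : (∑ i, d.wgt ω i * d.Dunit ω i z * d.Yv ω i) = (d.N : ℝ) * d.Yht ω z := by
    rw [Yht, ← mul_assoc, mul_inv_cancel₀ d.N_ne, one_mul, d.sum_idx]
    refine Finset.sum_congr rfl fun w _ => Finset.sum_congr rfl fun s _ => ?_
    simp only [Dunit, wgt, Yv, Matrix.of_apply]
    split_ifs with hz
    · rw [hz]; ring
    · ring
  rw [hsum, Yhaj]
  have h1 := d.oneHt_ne hω z
  have h2 := d.N_ne
  field_simp

lemma resid_wls (hω : ω ∈ d.Ω) (i : d.Idx) :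
    lsResid (d.Dunit ω) (d.wgt ω) (d.Yv ω) i =
      d.Yobs ω i.1 i.2 - d.Yhaj ω (d.Z ω i.1 i.2) := by
  rw [lsResid]
  have h2 : (∑ k, d.Dunit ω i k * lsCoef (d.Dunit ω) (d.wgt ω) (d.Yv ω) k) =
      d.Yhaj ω (d.Z ω i.1 i.2) := by
    have h3 : ∀ k, d.Dunit ω i k * lsCoef (d.Dunit ω) (d.wgt ω) (d.Yv ω) k =
        if d.Z ω i.1 i.2 = k then d.Yhaj ω k else 0 := by
      intro k
      show (if d.Z ω i.1 i.2 = k then (1:ℝ) else 0) * _ = _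
      have hb : lsCoef (d.Dunit ω) (d.wgt ω) (d.Yv ω) = d.Yhaj ω := betaWls_eq d hω
      rw [hb]
      split_ifs <;> simp
    rw [Finset.sum_congr rfl fun k _ => h3 k, Finset.sum_ite_eq]
    simp
  rw [h2]
  rfl

lemma Ew_eq (hω : ω ∈ d.Ω) (z : T) (w : Fin d.W) :
    (∑ i : d.Idx, if d.clUnit i = w then
        d.wgt ω i * d.Dunit ω i z * lsResid (d.Dunit ω) (d.wgt ω) (d.Yv ω) i else 0) =
      if ω.1 w = z.1 then (d.p z.1)⁻¹ * (d.M w : ℝ) * (d.Yw ω w z - d.Yhaj ω z) else 0 := by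
  show (∑ i : d.Idx, if i.1 = w then _ else 0) = _
  rw [d.sum_idx_cluster w]
  have h1 : ∀ s : Fin (d.M w),
      d.wgt ω ⟨w, s⟩ * d.Dunit ω ⟨w, s⟩ z * lsResid (d.Dunit ω) (d.wgt ω) (d.Yv ω) ⟨w, s⟩ =
      (d.prob w z)⁻¹ * ((if d.Z ω w s = z then d.Yobs ω w s else 0) -
        d.Yhaj ω z * (if d.Z ω w s = z then 1 else 0)) := by
    intro s
    rw [d.resid_wls hω]
    simp only [Dunit, wgt, Matrix.of_apply]
    split_ifs with hz
    · rw [hz]; ring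
    · ring
  rw [Finset.sum_congr rfl fun s _ => h1 s, ← Finset.mul_sum, Finset.sum_sub_distrib,
    ← Finset.mul_sum, d.sumY_Z, d.count_Z hω]
  by_cases h : ω.1 w = z.1
  · rw [if_pos h, if_pos h]
    have h4 := d.prob_inv_Mb w z
    have h5 := d.prob_ne w z
    have h6 := d.Mb_ne w z.2
    calc (d.prob w z)⁻¹ * ((d.Mb w z.2 : ℝ) * d.Yw ω w z - d.Yhaj ω z * (d.Mb w z.2 : ℝ))
        = ((d.prob w z)⁻¹ * (d.Mb w z.2 : ℝ)) * (d.Yw ω w z - d.Yhaj ω z) := by ring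
      _ = _ := by rw [h4]
  · rw [if_neg h, if_neg h, d.Yw_zero h]
    simp

lemma gram_ag (hω : ω ∈ d.Ω) :
    gram (d.Dag ω) (fun _ => 1) = Matrix.diagonal fun z : T => (d.Wa z.1 : ℝ) := by
  ext z z'
  simp only [gram, Matrix.of_apply, Matrix.diagonal_apply]
  by_cases h : z = z'
  · subst h
    rw [if_pos rfl, Fintype.sum_prod_type]
    have h1 : ∀ w : Fin d.W, (∑ b : Bool, (1 : ℝ) * d.Dag ω (w, b) z * d.Dag ω (w, b) z) =
        if ω.1 w = z.1 then 1 else 0 := by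
      intro w
      rw [← bool_collapse (ω.1 w) z 1]
      refine Finset.sum_congr rfl fun b _ => ?_
      simp only [Dag, Matrix.of_apply]
      split_ifs <;> ring
    rw [Finset.sum_congr rfl fun w _ => h1 w, Finset.sum_boole]
    norm_cast
    exact d.cardA hω z.1
  · rw [if_neg h, Finset.sum_eq_zero]
    intro i _
    simp only [Dag, Matrix.of_apply]
    split_ifs with h1 h2
    · exact absurd (h1.symm.trans h2) h
    all_goals ring

lemma betaAg_eq (hω : ω ∈ d.Ω) : d.betaAg ω = d.Yht ω := by
  funext z
  rw [betaAg, lsCoef, d.gram_ag hω,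
    diag_inv _ (fun z => d.Wa_ne z.1), Matrix.mulVec_diagonal]
  have hsum : (∑ i : d.AgIdx, (1 : ℝ) * d.Dag ω i z * d.Uag ω i) =
      ∑ w, if ω.1 w = z.1 then d.Uw ω w z else 0 := by
    rw [Fintype.sum_prod_type]
    refine Finset.sum_congr rfl fun w _ => ?_
    rw [← bool_collapse (ω.1 w) z (d.Uw ω w z)]
    refine Finset.sum_congr rfl fun b _ => ?_
    simp only [Dag, Uag, Matrix.of_apply]
    split_ifs with hz
    · rw [hz]; ring
    · ring
  rw [hsum, d.Yht_eq z, Finset.mul_sum, Finset.mul_sum]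
  refine Finset.sum_congr rfl fun w _ => ?_
  split_ifs with h
  · simp only [Uw, alpha, p]
    have := d.N_ne; have := d.W_ne; have := d.Wa_ne z.1
    field_simp
  · simp

lemma resid_ag (hω : ω ∈ d.Ω) (i : d.AgIdx) :
    lsResid (d.Dag ω) (fun _ => 1) (d.Uag ω) i =
      d.Uw ω i.1 (ω.1 i.1, i.2) - d.Yht ω (ω.1 i.1, i.2) := by
  rw [lsResid]
  have h2 : (∑ k, d.Dag ω i k * lsCoef (d.Dag ω) (fun _ => 1) (d.Uag ω) k) =
      d.Yht ω (ω.1 i.1, i.2) := by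
    have h3 : ∀ k, d.Dag ω i k * lsCoef (d.Dag ω) (fun _ => 1) (d.Uag ω) k =
        if (ω.1 i.1, i.2) = k then d.Yht ω k else 0 := by
      intro k
      show (if (ω.1 i.1, i.2) = k then (1:ℝ) else 0) * _ = _
      have hb : lsCoef (d.Dag ω) (fun _ => 1) (d.Uag ω) = d.Yht ω := betaAg_eq d hω
      rw [hb]
      split_ifs <;> simp
    rw [Finset.sum_congr rfl fun k _ => h3 k, Finset.sum_ite_eq]
    simp
  rw [h2]
  rfl

lemma Fw_eq (hω : ω ∈ d.Ω) (z : T) (w : Fin d.W) :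
    (∑ i : d.AgIdx, if d.clAg i = w then
        (1:ℝ) * d.Dag ω i z * lsResid (d.Dag ω) (fun _ => 1) (d.Uag ω) i else 0) =
      if ω.1 w = z.1 then d.Uw ω w z - d.Yht ω z else 0 := by
  show (∑ i : d.AgIdx, if i.1 = w then _ else 0) = _
  rw [d.sum_ag_cluster w]
  rw [← bool_collapse (ω.1 w) z (d.Uw ω w z - d.Yht ω z)]
  refine Finset.sum_congr rfl fun b _ => ?_
  rw [d.resid_ag hω]
  simp only [Dag, Matrix.of_apply]
  split_ifs with hz
  · rw [hz]; ring
  · ring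

lemma scalar_wls (n o o' wr wa m e e' : ℝ) (hn : n ≠ 0) (ho : o ≠ 0) (ho' : o' ≠ 0)
    (hwa : wa ≠ 0) (hwa1 : wa - 1 ≠ 0) :
    (n * o)⁻¹ * ((wa / wr)⁻¹ * m * e * ((wa / wr)⁻¹ * m * e')) * (n * o')⁻¹
      = o⁻¹ * ((wa - 1) / wa * ((wa⁻¹ * ((wa - 1)⁻¹ * ((wr * m / n) ^ 2 * e * e'))) * o'⁻¹)) := by
  field_simp

lemma scalar_ag (wa u u' : ℝ) (hwa : wa ≠ 0) (hwa1 : wa - 1 ≠ 0) :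
    wa⁻¹ * (u * u') * wa⁻¹ = (wa - 1) / wa * (wa⁻¹ * ((wa - 1)⁻¹ * (u * u'))) := by
  field_simp

end Design

/-- For every realization of the 2² split-plot assignment, with
`1̂_ht = diag(1̂_ht(z))` and rows/columns ordered by `z ∈ T`:
`Ṽ_wls = 1̂_ht⁻¹ · diag(((W₀−1)/W₀)I₂, ((W₁−1)/W₁)I₂) · V̂_haj · 1̂_ht⁻¹` and
`Ṽ_ag = diag(((W₀−1)/W₀)I₂, ((W₁−1)/W₁)I₂) · V̂_ht`. -/
theorem cluster_robust_identities (d : Design) :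
    ∀ ω ∈ d.Ω,
      d.Vwls ω =
        (Matrix.diagonal fun z : T => d.oneHt ω z)⁻¹ *
          ((Matrix.diagonal fun z : T => ((d.Wa z.1 : ℝ) - 1) / (d.Wa z.1 : ℝ)) *
            (d.Vhaj ω * (Matrix.diagonal fun z : T => d.oneHt ω z)⁻¹)) ∧
      d.VagCR ω =
        (Matrix.diagonal fun z : T => ((d.Wa z.1 : ℝ) - 1) / (d.Wa z.1 : ℝ)) * d.Vht ω := by
  intro ω hω
  have hN := d.N_ne
  have hW := d.W_ne
  have ho : ∀ z : T, d.oneHt ω z ≠ 0 := d.oneHt_ne hω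
  constructor
  · rw [Design.Vwls, clusterCov, d.gram_wls hω,
      Design.diag_inv _ (fun z => mul_ne_zero hN (ho z)), Design.diag_inv _ ho]
    ext z z'
    simp only [Matrix.mul_diagonal, Matrix.diagonal_mul, Matrix.of_apply, Design.Vhaj]
    rw [Finset.sum_congr rfl fun g _ => by rw [d.Ew_eq hω z g, d.Ew_eq hω z' g]]
    by_cases hzz : z.1 = z'.1
    · rw [if_pos hzz, Design.ShajHat, ← hzz]
      have hWa := d.Wa_ne z.1
      have hWa1 := d.Wa_sub_one_ne z.1
      have hp := d.p_ne z.1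
      conv_lhs => rw [Finset.mul_sum, Finset.sum_mul]
      conv_rhs => rw [Finset.mul_sum, Finset.mul_sum, Finset.sum_mul, Finset.mul_sum,
        Finset.mul_sum]
      refine Finset.sum_congr rfl fun w _ => ?_
      by_cases hA : ω.1 w = z.1
      · simp only [if_pos hA]
        rw [show d.p z.1 = (d.Wa z.1 : ℝ) / (d.W : ℝ) from rfl,
          show d.alpha w = (d.W : ℝ) * (d.M w : ℝ) / (d.N : ℝ) from rfl]
        linear_combination Design.scalar_wls (d.N : ℝ) (d.oneHt ω z) (d.oneHt ω z')
          (d.W : ℝ) (d.Wa z.1 : ℝ) (d.M w : ℝ) (d.Yw ω w z - d.Yhaj ω z)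
          (d.Yw ω w z' - d.Yhaj ω z') hN (ho z) (ho z') hWa hWa1
      · simp only [if_neg hA]
        simp
    · rw [if_neg hzz]
      have hz0 : (∑ w, (if ω.1 w = z.1 then
            (d.p z.1)⁻¹ * (d.M w : ℝ) * (d.Yw ω w z - d.Yhaj ω z) else 0) *
          (if ω.1 w = z'.1 then
            (d.p z'.1)⁻¹ * (d.M w : ℝ) * (d.Yw ω w z' - d.Yhaj ω z') else 0)) = 0 := by
        refine Finset.sum_eq_zero fun w _ => ?_
        by_cases hA : ω.1 w = z.1
        · rw [if_neg (fun h => hzz (hA.symm.trans h)), mul_zero]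
        · rw [if_neg hA, zero_mul]
      rw [hz0]
      simp
  · rw [Design.VagCR, clusterCov, d.gram_ag hω, Design.diag_inv _ (fun z => d.Wa_ne z.1)]
    ext z z'
    simp only [Matrix.mul_diagonal, Matrix.diagonal_mul, Matrix.of_apply, Design.Vht]
    rw [Finset.sum_congr rfl fun g _ => by rw [d.Fw_eq hω z g, d.Fw_eq hω z' g]]
    by_cases hzz : z.1 = z'.1
    · rw [if_pos hzz, Design.ShtHat, ← hzz]
      have hWa := d.Wa_ne z.1
      have hWa1 := d.Wa_sub_one_ne z.1
      conv_lhs => rw [Finset.mul_sum, Finset.sum_mul]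
      conv_rhs => rw [Finset.mul_sum, Finset.mul_sum, Finset.mul_sum]
      refine Finset.sum_congr rfl fun w _ => ?_
      by_cases hA : ω.1 w = z.1
      · simp only [if_pos hA]
        simp only [Design.Uw]
        linear_combination Design.scalar_ag (d.Wa z.1 : ℝ)
          (d.alpha w * d.Yw ω w z - d.Yht ω z) (d.alpha w * d.Yw ω w z' - d.Yht ω z')
          hWa hWa1
      · simp only [if_neg hA]
        simp
    · rw [if_neg hzz]
      have hz0 : (∑ w, (if ω.1 w = z.1 then d.Uw ω w z - d.Yht ω z else 0) *
          (if ω.1 w = z'.1 then d.Uw ω w z' - d.Yht ω z' else 0)) = 0 := by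
        refine Finset.sum_eq_zero fun w _ => ?_
        by_cases hA : ω.1 w = z.1
        · rw [if_neg (fun h => hzz (hA.symm.trans h)), mul_zero]
        · rw [if_neg hA, zero_mul]
      rw [hz0]
      simp

end SplitPlotPaper
end
end

section
/- Define the HC2 cluster-robust covariance of the aggregate regression as Ṽ_ag2 = (D_agᵀD_ag)^{-1}(Σ_w D_ag,wᵀ(I−P_ag,w)^{-1/2} e_ag,w e_ag,wᵀ (I−P_ag,w)^{-1/2} D_ag,w)(D_agᵀD_ag)^{-1}, where P_ag,w = D_ag,w(D_agᵀD_ag)^{-1}D_ag,wᵀ, and define Ṽ_ols2 analogously for the unweighted unit regression with P_ols,w = D_w(DᵀD)^{-1}D_wᵀ. Then for every realization of the 2^2 split-plot assignment, Ṽ_ag2 = V̂_ht exactly; and under the uniform design condition, Ṽ_ols2 = Ṽ_ag2 = V̂, where V̂ denotes the common value of V̂_ht and V̂_haj. -/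
open Finset Matrix Filter
open scoped Classical BigOperators

noncomputable section

namespace SplitPlotPaper

namespace Design

variable (d : Design)

/-- The two rows of the aggregate design matrix belonging to whole-plot `w`. -/
def DagBlock (ω : d.Assign) (w : Fin d.W) : Matrix Bool T ℝ :=
  Matrix.of fun b z => d.Dag ω (w, b) z

/-- The leverage block `P_ag,w = D_ag,w (D_agᵀ D_ag)⁻¹ D_ag,wᵀ`. -/
def PagBlock (ω : d.Assign) (w : Fin d.W) : Matrix Bool Bool ℝ :=
  d.DagBlock ω w * (gram (d.Dag ω) fun _ => 1)⁻¹ * (d.DagBlock ω w)ᵀ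

/-- The residuals of the aggregate regression in whole-plot `w`. -/
def eAg (ω : d.Assign) (w : Fin d.W) : Bool → ℝ :=
  fun b => lsResid (d.Dag ω) (fun _ => 1) (d.Uag ω) (w, b)

/-- The HC2 cluster-robust covariance of the aggregate regression, where `Q w` is the
positive-semidefinite square root of `I − P_ag,w`, so that `(Q w)⁻¹ = (I−P_ag,w)^{-1/2}`. -/
def Vag2 (ω : d.Assign) (Q : Fin d.W → Matrix Bool Bool ℝ) : Matrix T T ℝ :=
  (gram (d.Dag ω) fun _ => 1)⁻¹ *
    (Matrix.of fun z z' =>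
      ∑ w, ((d.DagBlock ω w)ᵀ.mulVec ((Q w)⁻¹.mulVec (d.eAg ω w))) z *
           ((d.DagBlock ω w)ᵀ.mulVec ((Q w)⁻¹.mulVec (d.eAg ω w))) z') *
    (gram (d.Dag ω) fun _ => 1)⁻¹

/-- The rows of the unit design matrix belonging to whole-plot `w`. -/
def DunitBlock (ω : d.Assign) (w : Fin d.W) : Matrix (Fin (d.M w)) T ℝ :=
  Matrix.of fun s z => d.Dunit ω ⟨w, s⟩ z

/-- The leverage block `P_ols,w = D_w (Dᵀ D)⁻¹ D_wᵀ`. -/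
def PunitBlock (ω : d.Assign) (w : Fin d.W) : Matrix (Fin (d.M w)) (Fin (d.M w)) ℝ :=
  d.DunitBlock ω w * (gram (d.Dunit ω) fun _ => 1)⁻¹ * (d.DunitBlock ω w)ᵀ

/-- The residuals of the unweighted unit regression in whole-plot `w`. -/
def eUnit (ω : d.Assign) (w : Fin d.W) : Fin (d.M w) → ℝ :=
  fun s => lsResid (d.Dunit ω) (fun _ => 1) (d.Yv ω) ⟨w, s⟩

/-- The HC2 cluster-robust covariance of the unweighted unit regression, where `Q w` is
the positive-semidefinite square root of `I − P_ols,w`. -/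
def Vols2 (ω : d.Assign) (Q : (w : Fin d.W) → Matrix (Fin (d.M w)) (Fin (d.M w)) ℝ) :
    Matrix T T ℝ :=
  (gram (d.Dunit ω) fun _ => 1)⁻¹ *
    (Matrix.of fun z z' =>
      ∑ w, ((d.DunitBlock ω w)ᵀ.mulVec ((Q w)⁻¹.mulVec (d.eUnit ω w))) z *
           ((d.DunitBlock ω w)ᵀ.mulVec ((Q w)⁻¹.mulVec (d.eUnit ω w))) z') *
    (gram (d.Dunit ω) fun _ => 1)⁻¹

end Design

set_option linter.unusedSectionVars false

namespace SPaux
variable {n : Type*} [Fintype n] [DecidableEq n]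

lemma sqrt_eigen (Q : Matrix n n ℝ) (hQ : Q.PosSemidef) (x : n → ℝ) (l : ℝ) (hl : 0 < l)
    (hx : (Q * Q).mulVec x = l • x) : Q.mulVec x = Real.sqrt l • x := by
  set y := Q.mulVec x - Real.sqrt l • x with hy
  have hls : Real.sqrt l * Real.sqrt l = l := Real.mul_self_sqrt hl.le
  have h1 : Q.mulVec (Q.mulVec x) = l • x := by
    rw [Matrix.mulVec_mulVec]; exact hx
  have hQy : Q.mulVec y = - (Real.sqrt l • y) := by
    simp only [hy, Matrix.mulVec_sub, Matrix.mulVec_smul, h1]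
    funext i
    simp only [Pi.sub_apply, Pi.smul_apply, Pi.neg_apply, smul_eq_mul]
    linear_combination (-x i) * hls
  have hpsd := hQ.dotProduct_mulVec_nonneg y
  have hdot : (star y) ⬝ᵥ Q.mulVec y = - (Real.sqrt l * (y ⬝ᵥ y)) := by
    rw [hQy]; simp [star_trivial, dotProduct, Finset.mul_sum]
    exact Finset.sum_congr rfl fun i _ => by ring
  have hyy : y ⬝ᵥ y = 0 := by
    have h0 : (0:ℝ) ≤ y ⬝ᵥ y := Finset.sum_nonneg fun i _ => mul_self_nonneg _
    have hsl : 0 < Real.sqrt l := Real.sqrt_pos.2 hl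
    rw [hdot] at hpsd
    nlinarith
  have hy0 : y = 0 := by
    funext i
    have h2 : ∑ j, y j * y j = 0 := hyy
    have h := (Finset.sum_eq_zero_iff_of_nonneg (fun j _ => mul_self_nonneg (y j))).1 h2 i (Finset.mem_univ i)
    simpa using mul_self_eq_zero.1 h
  have h3 : Q.mulVec x - Real.sqrt l • x = 0 := hy0
  exact sub_eq_zero.1 h3

lemma inv_one_sub (P : Matrix n n ℝ) (c : ℝ) (hc : c < 1) (hP : P * P = c • P) :
    (1 - P) * (1 + (1 - c)⁻¹ • P) = 1 ∧ (1 + (1 - c)⁻¹ • P) * (1 - P) = 1 := by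
  have h1c : (1 : ℝ) - c ≠ 0 := by intro h; linarith [h]
  have hgc : (1 - c)⁻¹ * c = (1 - c)⁻¹ - 1 := by field_simp; ring
  constructor
  · simp only [sub_mul, mul_sub, mul_add, add_mul, mul_one, one_mul, Matrix.mul_smul,
      Matrix.smul_mul, hP, smul_smul, hgc, sub_smul, one_smul]
    abel
  · simp only [sub_mul, mul_sub, mul_add, add_mul, mul_one, one_mul, Matrix.mul_smul,
      Matrix.smul_mul, hP, smul_smul, hgc, sub_smul, one_smul]
    abel

lemma key (Q P : Matrix n n ℝ) (hQ : Q.PosSemidef) (hQQ : Q * Q = 1 - P) (c : ℝ)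
    (hc : c < 1) (hP : P * P = c • P) (x : n → ℝ)
    (hx : P.mulVec x = c • x) (e : n → ℝ) :
    x ⬝ᵥ Q⁻¹.mulVec e = (Real.sqrt (1 - c))⁻¹ * (x ⬝ᵥ e) := by
  have hl : (0:ℝ) < 1 - c := by linarith
  have hs : Real.sqrt (1 - c) ≠ 0 := ne_of_gt (Real.sqrt_pos.2 hl)
  have hQx : Q.mulVec x = Real.sqrt (1 - c) • x := by
    apply sqrt_eigen Q hQ x _ hl
    rw [hQQ, Matrix.sub_mulVec, Matrix.one_mulVec, hx, sub_smul, one_smul]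
  have hinv := inv_one_sub P c hc hP
  have hdet : IsUnit (1 - P).det := Matrix.isUnit_det_of_right_inverse hinv.1
  have hQdet : IsUnit Q.det := by
    rw [← hQQ, Matrix.det_mul] at hdet
    exact isUnit_of_mul_isUnit_left hdet
  have hQinvx : Q⁻¹.mulVec x = (Real.sqrt (1 - c))⁻¹ • x := by
    have h4 : Q⁻¹.mulVec (Q.mulVec x) = x := by
      rw [Matrix.mulVec_mulVec, Matrix.nonsing_inv_mul Q hQdet, Matrix.one_mulVec]
    rw [hQx, Matrix.mulVec_smul] at h4
    exact ((inv_smul_eq_iff₀ hs).2 h4.symm).symm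
  have hsymm : Q⁻¹ᵀ = Q⁻¹ := by
    have hQt : Qᵀ = Q := by
      have h5 := hQ.1.eq
      rwa [Matrix.conjTranspose_eq_transpose_of_trivial] at h5
    rw [Matrix.transpose_nonsing_inv, hQt]
  calc x ⬝ᵥ Q⁻¹.mulVec e = Matrix.vecMul x Q⁻¹ ⬝ᵥ e := (Matrix.dotProduct_mulVec _ _ _)
    _ = (Q⁻¹ᵀ.mulVec x) ⬝ᵥ e := by rw [Matrix.mulVec_transpose]
    _ = (Real.sqrt (1 - c))⁻¹ * (x ⬝ᵥ e) := by
        rw [hsymm, hQinvx, smul_dotProduct]; simp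

end SPaux

set_option linter.unusedSectionVars true

set_option maxHeartbeats 3200000 in
/-- The HC2 cluster-robust covariance of the aggregate regression
recovers `V̂_ht` exactly: `Ṽ_ag2 = V̂_ht` for every realization of the assignment; and
under the uniform design condition `Ṽ_ols2 = Ṽ_ag2 = V̂`, where `V̂` is the common value
of `V̂_ht` and `V̂_haj`.  Here `(I−P_w)^{-1/2}` is expressed as `(Q w)⁻¹` for the (unique)
positive-semidefinite square root `Q w` of `I − P_w`. -/
theorem hc2_recovers_vht (d : Design) (ω : d.Assign) (hω : ω ∈ d.Ω) :
    (∀ Q : Fin d.W → Matrix Bool Bool ℝ,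
      (∀ w, (Q w).PosSemidef ∧ Q w * Q w = 1 - d.PagBlock ω w) →
        d.Vag2 ω Q = d.Vht ω) ∧
    ((∃ Mc0 Mc1 : ℕ, (∀ w, d.M0 w = Mc0) ∧ (∀ w, d.M1 w = Mc1)) →
      d.Vhaj ω = d.Vht ω ∧
      (∀ Qu : (w : Fin d.W) → Matrix (Fin (d.M w)) (Fin (d.M w)) ℝ,
        (∀ w, (Qu w).PosSemidef ∧ Qu w * Qu w = 1 - d.PunitBlock ω w) →
          d.Vols2 ω Qu = d.Vht ω)) := by
  classical
  obtain ⟨-, hcA, hcB⟩ := Finset.mem_filter.mp hω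
  have hW0 := d.hW0
  have hW1 := d.hW1
  have hWpos : 0 < d.W := by show 0 < d.W0 + d.W1; omega
  have cardA : ∀ a : Bool, (Finset.univ.filter fun w => ω.1 w = a).card = d.Wa a := by
    intro a
    cases a with
    | true => simpa [Design.Wa] using hcA
    | false =>
      have h2 := Finset.card_filter_add_card_filter_not
        (s := (Finset.univ : Finset (Fin d.W))) (p := fun w => ω.1 w = true)
      have h3 : (Finset.univ.filter fun w => ¬ ω.1 w = true)
          = (Finset.univ.filter fun w => ω.1 w = false) := by
        apply Finset.filter_congr
        intro w _
        cases h : ω.1 w <;> simp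
      rw [hcA, h3] at h2
      have h4 : (Finset.univ : Finset (Fin d.W)).card = d.W0 + d.W1 := by
        simp [Finset.card_univ]
      simp only [Design.Wa, Bool.false_eq_true, if_false]
      omega
  have cardB : ∀ (w : Fin d.W) (b : Bool),
      (Finset.univ.filter fun s => ω.2 w s = b).card = d.Mb w b := by
    intro w b
    cases b with
    | true => simpa [Design.Mb] using hcB w
    | false =>
      have h2 := Finset.card_filter_add_card_filter_not
        (s := (Finset.univ : Finset (Fin (d.M w)))) (p := fun s => ω.2 w s = true)
      have h3 : (Finset.univ.filter fun s => ¬ ω.2 w s = true)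
          = (Finset.univ.filter fun s => ω.2 w s = false) := by
        apply Finset.filter_congr
        intro s _
        cases h : ω.2 w s <;> simp
      rw [hcB w, h3] at h2
      have h4 : (Finset.univ : Finset (Fin (d.M w))).card = d.M0 w + d.M1 w := by
        simp [Finset.card_univ]
      simp only [Design.Mb, Bool.false_eq_true, if_false]
      omega
  have WaN : ∀ a : Bool, 2 ≤ d.Wa a := by
    intro a
    cases a
    · simpa [Design.Wa] using hW0
    · simpa [Design.Wa] using hW1
  have WaR : ∀ a, (2:ℝ) ≤ (d.Wa a : ℝ) := fun a => by exact_mod_cast WaN a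
  have hWa0 : ∀ a, (d.Wa a : ℝ) ≠ 0 := fun a => by linarith [WaR a]
  have hWa1 : ∀ a, (d.Wa a : ℝ) - 1 ≠ 0 := fun a => by linarith [WaR a]
  have hcW : ∀ a, ((d.Wa a : ℝ))⁻¹ < 1 := fun a => inv_lt_one_of_one_lt₀ (by linarith [WaR a])
  have hl0 : ∀ a : Bool, (0:ℝ) ≤ 1 - (d.Wa a : ℝ)⁻¹ := fun a => by linarith [hcW a]
  have MbN : ∀ w b, 2 ≤ d.Mb w b := by
    intro w b
    cases b
    · simpa [Design.Mb] using d.hM0 w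
    · simpa [Design.Mb] using d.hM1 w
  have MbR : ∀ w b, (2:ℝ) ≤ (d.Mb w b : ℝ) := fun w b => by exact_mod_cast MbN w b
  have hMb0 : ∀ w b, (d.Mb w b : ℝ) ≠ 0 := fun w b => by linarith [MbR w b]
  have hWR : (d.W : ℝ) ≠ 0 := Nat.cast_ne_zero.mpr hWpos.ne'
  have hMR : ∀ w, (d.M w : ℝ) ≠ 0 := fun w =>
    Nat.cast_ne_zero.mpr (by have := d.hM0 w; show d.M0 w + d.M1 w ≠ 0; omega)
  have hNpos : 0 < d.N := by
    rw [Design.N]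
    apply Finset.sum_pos
    · intro w _
      have := d.hM0 w
      show 0 < d.M0 w + d.M1 w
      omega
    · exact ⟨⟨0, hWpos⟩, Finset.mem_univ _⟩
  have hNR : (d.N : ℝ) ≠ 0 := Nat.cast_ne_zero.mpr hNpos.ne'
  have sumConstA : ∀ (a : Bool) (c : ℝ),
      (∑ w, if ω.1 w = a then c else 0) = (d.Wa a : ℝ) * c := by
    intro a c
    rw [← Finset.sum_filter, Finset.sum_const, cardA a, nsmul_eq_mul]
  have sumConstB : ∀ (w : Fin d.W) (b : Bool) (c : ℝ),
      (∑ s, if ω.2 w s = b then c else 0) = (d.Mb w b : ℝ) * c := by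
    intro w b c
    rw [← Finset.sum_filter, Finset.sum_const, cardB w b, nsmul_eq_mul]
  have hZfst : ∀ (w : Fin d.W) (s : Fin (d.M w)) (z : T), d.Z ω w s = z → ω.1 w = z.1 :=
    fun w s z h => congrArg Prod.fst h
  have hSb : ∀ (w : Fin d.W) (z : T),
      (∑ s, if d.Z ω w s = z then d.Yobs ω w s else 0)
        = if ω.1 w = z.1 then (d.Mb w z.2 : ℝ) * d.Yw ω w z else 0 := by
    intro w z
    by_cases h : ω.1 w = z.1
    · rw [if_pos h, Design.Yw, ← mul_assoc, mul_inv_cancel₀ (hMb0 w z.2), one_mul]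
    · rw [if_neg h]
      exact Finset.sum_eq_zero fun s _ => if_neg fun hzz => h (hZfst w s z hzz)
  have hSc : ∀ (w : Fin d.W) (z : T) (c : ℝ),
      (∑ s, if d.Z ω w s = z then c else 0)
        = if ω.1 w = z.1 then (d.Mb w z.2 : ℝ) * c else 0 := by
    intro w z c
    by_cases h : ω.1 w = z.1
    · rw [if_pos h, ← sumConstB w z.2 c]
      apply Finset.sum_congr rfl
      intro s _
      apply if_congr _ rfl rfl
      constructor
      · intro hzz; exact congrArg Prod.snd hzz
      · intro hb
        show (ω.1 w, ω.2 w s) = z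
        rw [h, hb]
    · rw [if_neg h]
      exact Finset.sum_eq_zero fun s _ => if_neg fun hzz => h (hZfst w s z hzz)
  have hYht : ∀ z : T, d.Yht ω z
      = (d.Wa z.1 : ℝ)⁻¹ * ∑ w, (if ω.1 w = z.1 then d.Uw ω w z else 0) := by
    intro z
    rw [Design.Yht, Finset.mul_sum, Finset.mul_sum]
    apply Finset.sum_congr rfl
    intro w _
    have h1 : (∑ s, if d.Z ω w s = z then (d.prob w z)⁻¹ * d.Yobs ω w s else 0)
        = (d.prob w z)⁻¹ * ∑ s, (if d.Z ω w s = z then d.Yobs ω w s else 0) := by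
      rw [Finset.mul_sum]
      exact Finset.sum_congr rfl fun s _ => by rw [mul_ite, mul_zero]
    rw [h1, hSb w z]
    by_cases h : ω.1 w = z.1
    · rw [if_pos h, if_pos h, Design.Uw, Design.alpha, Design.prob, Design.p, Design.q]
      field_simp [hNR, hWR, hWa0 z.1, hMR w, hMb0 w z.2]
    · rw [if_neg h, if_neg h]
      simp
  have sumT : ∀ (t : T) (f : T → ℝ), (∑ z : T, (if t = z then (1:ℝ) else 0) * f z) = f t := by
    intro t f
    simp [ite_mul, zero_mul, one_mul]
  have dinv : ∀ (v : T → ℝ), (∀ z, v z ≠ 0) →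
      (Matrix.diagonal v)⁻¹ = Matrix.diagonal (fun z => (v z)⁻¹) := by
    intro v hv
    apply Matrix.inv_eq_right_inv
    rw [Matrix.diagonal_mul_diagonal]
    ext z z'
    by_cases h : z = z'
    · subst h
      simp [Matrix.diagonal_apply_eq, Matrix.one_apply_eq, mul_inv_cancel₀ (hv z)]
    · simp [Matrix.diagonal_apply_ne _ h, Matrix.one_apply_ne h]
  have mainAg : ∀ Q : Fin d.W → Matrix Bool Bool ℝ,
      (∀ w, (Q w).PosSemidef ∧ Q w * Q w = 1 - d.PagBlock ω w) →
        d.Vag2 ω Q = d.Vht ω := by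
    intro Q hQs
    have G1 : gram (d.Dag ω) (fun _ => (1:ℝ)) = Matrix.diagonal (fun z : T => (d.Wa z.1 : ℝ)) := by
      ext z z'
      simp only [gram, Matrix.of_apply, one_mul]
      rw [Fintype.sum_prod_type]
      by_cases hzz : z = z'
      · subst hzz
        rw [Matrix.diagonal_apply_eq]
        have hw : ∀ w : Fin d.W,
            (∑ b, d.Dag ω (w, b) z * d.Dag ω (w, b) z) = if ω.1 w = z.1 then (1:ℝ) else 0 := by
          intro w
          obtain ⟨z1, z2⟩ := z
          by_cases h : ω.1 w = z1 <;> cases z2 <;>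
            simp [Design.Dag, Prod.mk.injEq, h, Fintype.sum_bool]
        rw [Finset.sum_congr rfl fun w _ => hw w, sumConstA, mul_one]
      · rw [Matrix.diagonal_apply_ne _ hzz]
        apply Finset.sum_eq_zero
        intro w _
        apply Finset.sum_eq_zero
        intro b _
        by_cases h1 : (ω.1 w, b) = z
        · by_cases h2 : (ω.1 w, b) = z'
          · exact absurd (h1.symm.trans h2) hzz
          · simp [Design.Dag, h2]
        · simp [Design.Dag, h1]
    have hginv : (gram (d.Dag ω) (fun _ => (1:ℝ)))⁻¹
        = Matrix.diagonal (fun z : T => (d.Wa z.1 : ℝ)⁻¹) := by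
      rw [G1, dinv _ (fun z => hWa0 z.1)]
    have hbag : lsCoef (d.Dag ω) (fun _ => (1:ℝ)) (d.Uag ω) = d.Yht ω := by
      funext z
      rw [lsCoef, hginv, Matrix.mulVec_diagonal, hYht z]
      congr 1
      rw [Fintype.sum_prod_type]
      apply Finset.sum_congr rfl
      intro w _
      obtain ⟨z1, z2⟩ := z
      by_cases h : ω.1 w = z1 <;> cases z2 <;>
        simp [Design.Dag, Design.Uag, Prod.mk.injEq, h, Fintype.sum_bool]
    have heAg : ∀ w b, d.eAg ω w b = d.Uag ω (w, b) - d.Yht ω (ω.1 w, b) := by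
      intro w b
      rw [Design.eAg, lsResid, hbag]
      congr 1
      simp only [Design.Dag, Matrix.of_apply]
      exact sumT (ω.1 w, b) (d.Yht ω)
    have hz : ∀ (w : Fin d.W) (z : T), ω.1 w = z.1 →
        d.eAg ω w z.2 = d.alpha w * d.Yw ω w z - d.Yht ω z := by
      intro w z h
      rw [heAg w z.2]
      have hzz2 : ((ω.1 w : Bool), z.2) = z := by rw [h]
      show d.Uw ω w (ω.1 w, z.2) - d.Yht ω (ω.1 w, z.2) = _
      rw [hzz2, Design.Uw]
    have hPag : ∀ w, d.PagBlock ω w = ((d.Wa (ω.1 w) : ℝ))⁻¹ • (1 : Matrix Bool Bool ℝ) := by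
      intro w
      rw [Design.PagBlock, hginv]
      ext b b'
      rw [Matrix.mul_apply]
      simp only [Matrix.mul_diagonal, Matrix.transpose_apply, Design.DagBlock,
        Matrix.of_apply, Design.Dag, Matrix.smul_apply, Matrix.one_apply, smul_eq_mul]
      rw [Fintype.sum_prod_type]
      cases hA : ω.1 w <;> cases b <;> cases b' <;>
        simp [Fintype.sum_bool, Prod.mk.injEq, hA]
    have hPP : ∀ w, d.PagBlock ω w * d.PagBlock ω w
        = ((d.Wa (ω.1 w) : ℝ))⁻¹ • d.PagBlock ω w := by
      intro w
      rw [hPag w, Matrix.smul_mul, one_mul]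
    have hxP : ∀ (w : Fin d.W) (x : Bool → ℝ),
        (d.PagBlock ω w).mulVec x = ((d.Wa (ω.1 w) : ℝ))⁻¹ • x := by
      intro w x
      rw [hPag w, Matrix.smul_mulVec, Matrix.one_mulVec]
    have hu : ∀ (w : Fin d.W) (z : T),
        ((d.DagBlock ω w)ᵀ.mulVec ((Q w)⁻¹.mulVec (d.eAg ω w))) z
          = if ω.1 w = z.1
            then (Real.sqrt (1 - (d.Wa (ω.1 w) : ℝ)⁻¹))⁻¹ * d.eAg ω w z.2 else 0 := by
      intro w z
      have hkey := SPaux.key (Q w) (d.PagBlock ω w) (hQs w).1 (hQs w).2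
        ((d.Wa (ω.1 w) : ℝ))⁻¹ (hcW (ω.1 w)) (hPP w)
        (fun b => d.DagBlock ω w b z) (hxP w _) (d.eAg ω w)
      have hLHS : ((d.DagBlock ω w)ᵀ.mulVec ((Q w)⁻¹.mulVec (d.eAg ω w))) z
          = (fun b => d.DagBlock ω w b z) ⬝ᵥ ((Q w)⁻¹.mulVec (d.eAg ω w)) := rfl
      rw [hLHS, hkey]
      have hdot : (fun b => d.DagBlock ω w b z) ⬝ᵥ d.eAg ω w
          = if ω.1 w = z.1 then d.eAg ω w z.2 else 0 := by
        obtain ⟨z1, z2⟩ := z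
        by_cases h : ω.1 w = z1 <;> cases z2 <;>
          simp [dotProduct, Design.DagBlock, Design.Dag, Fintype.sum_bool,
            Prod.mk.injEq, h]
      rw [hdot]
      by_cases h : ω.1 w = z.1
      · rw [if_pos h, if_pos h]
      · rw [if_neg h, if_neg h, mul_zero]
    ext z z'
    rw [Design.Vag2, hginv, Matrix.mul_diagonal, Matrix.diagonal_mul, Matrix.of_apply]
    simp only [Design.Vht, Matrix.of_apply, Design.ShtHat]
    by_cases hzz : z.1 = z'.1
    · rw [if_pos hzz]
      have h2 : (Real.sqrt (1 - (d.Wa z.1 : ℝ)⁻¹))⁻¹ * (Real.sqrt (1 - (d.Wa z.1 : ℝ)⁻¹))⁻¹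
          = (1 - (d.Wa z.1 : ℝ)⁻¹)⁻¹ := by
        rw [← mul_inv, Real.mul_self_sqrt (hl0 z.1)]
      have hsum : (∑ w, ((d.DagBlock ω w)ᵀ.mulVec ((Q w)⁻¹.mulVec (d.eAg ω w))) z *
            ((d.DagBlock ω w)ᵀ.mulVec ((Q w)⁻¹.mulVec (d.eAg ω w))) z')
          = (1 - (d.Wa z.1 : ℝ)⁻¹)⁻¹ * ∑ w, (if ω.1 w = z.1 then
              d.eAg ω w z.2 * d.eAg ω w z'.2 else 0) := by
        rw [Finset.mul_sum]
        apply Finset.sum_congr rfl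
        intro w _
        rw [hu w z, hu w z']
        by_cases h : ω.1 w = z.1
        · rw [if_pos h, if_pos (h.trans hzz), if_pos h, h]
          linear_combination (d.eAg ω w z.2 * d.eAg ω w z'.2) * h2
        · rw [if_neg h, zero_mul, if_neg h, mul_zero]
      have hsum2 : (∑ w, (if ω.1 w = z.1 then d.eAg ω w z.2 * d.eAg ω w z'.2 else 0))
          = ∑ w, (if ω.1 w = z.1 then
              (d.alpha w * d.Yw ω w z - d.Yht ω z) * (d.alpha w * d.Yw ω w z' - d.Yht ω z')
            else 0) := by
        apply Finset.sum_congr rfl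
        intro w _
        by_cases h : ω.1 w = z.1
        · rw [if_pos h, if_pos h, hz w z h, hz w z' (h.trans hzz)]
        · rw [if_neg h, if_neg h]
      have hlam : 1 - (d.Wa z.1 : ℝ)⁻¹ = ((d.Wa z.1 : ℝ) - 1) / (d.Wa z.1 : ℝ) := by
        rw [eq_div_iff (hWa0 z.1), sub_mul, one_mul, inv_mul_cancel₀ (hWa0 z.1)]
      have hWu : (d.Wa z.1 : ℝ)⁻¹ * (d.Wa z.1 : ℝ) = 1 := inv_mul_cancel₀ (hWa0 z.1)
      have hscal : ∀ S : ℝ,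
          (d.Wa z.1 : ℝ)⁻¹ * ((1 - (d.Wa z.1 : ℝ)⁻¹)⁻¹ * S) * (d.Wa z.1 : ℝ)⁻¹
            = (d.Wa z.1 : ℝ)⁻¹ * (((d.Wa z.1 : ℝ) - 1)⁻¹ * S) := by
        intro S
        rw [hlam, inv_div]
        linear_combination ((d.Wa z.1 : ℝ) - 1)⁻¹ * S * (d.Wa z.1 : ℝ)⁻¹ * hWu
      rw [hsum, hsum2, ← hzz]
      exact hscal _
    · rw [if_neg hzz]
      have hsum0 : (∑ w, ((d.DagBlock ω w)ᵀ.mulVec ((Q w)⁻¹.mulVec (d.eAg ω w))) z *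
            ((d.DagBlock ω w)ᵀ.mulVec ((Q w)⁻¹.mulVec (d.eAg ω w))) z') = 0 := by
        apply Finset.sum_eq_zero
        intro w _
        rw [hu w z, hu w z']
        by_cases h1 : ω.1 w = z.1
        · rw [if_neg (fun h2 => hzz (h1.symm.trans h2)), mul_zero]
        · rw [if_neg h1, zero_mul]
      rw [hsum0, mul_zero, zero_mul]
  refine ⟨mainAg, ?_⟩
  rintro ⟨m0, m1, hm0, hm1⟩
  have hm02 : 2 ≤ m0 := hm0 ⟨0, hWpos⟩ ▸ d.hM0 ⟨0, hWpos⟩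
  have hm12 : 2 ≤ m1 := hm1 ⟨0, hWpos⟩ ▸ d.hM1 ⟨0, hWpos⟩
  have hMb : ∀ (w : Fin d.W) (b : Bool),
      (d.Mb w b : ℝ) = ((if b then m1 else m0 : ℕ) : ℝ) := by
    intro w b
    cases b <;> simp [Design.Mb, hm0 w, hm1 w]
  have hmbR2 : ∀ b : Bool, (2:ℝ) ≤ ((if b then m1 else m0 : ℕ) : ℝ) := by
    intro b
    cases b
    · simpa using (by exact_mod_cast hm02 : (2:ℝ) ≤ (m0:ℝ))
    · simpa using (by exact_mod_cast hm12 : (2:ℝ) ≤ (m1:ℝ))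
  have hmbR0 : ∀ b : Bool, ((if b then m1 else m0 : ℕ) : ℝ) ≠ 0 := fun b => by
    linarith [hmbR2 b]
  have hMw : ∀ w, (d.M w : ℝ) = (m0 : ℝ) + m1 := by
    intro w
    show ((d.M0 w + d.M1 w : ℕ) : ℝ) = _
    rw [hm0 w, hm1 w]
    push_cast
    ring
  have hm0m1 : (m0:ℝ) + m1 ≠ 0 := by
    have : (2:ℝ) ≤ (m0:ℝ) := by exact_mod_cast hm02
    have : (2:ℝ) ≤ (m1:ℝ) := by exact_mod_cast hm12
    linarith [‹(2:ℝ) ≤ (m0:ℝ)›]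
  have hNval : (d.N : ℝ) = (d.W : ℝ) * ((m0:ℝ) + m1) := by
    rw [Design.N, Nat.cast_sum, Finset.sum_congr rfl fun w _ => hMw w,
      Finset.sum_const, Finset.card_univ, Fintype.card_fin, nsmul_eq_mul]
  have halpha : ∀ w, d.alpha w = 1 := by
    intro w
    rw [Design.alpha, hMw w, hNval, div_self (mul_ne_zero hWR hm0m1)]
  have honeHt : ∀ z : T, d.oneHt ω z = 1 := by
    intro z
    rw [Design.oneHt]
    rw [Finset.sum_congr rfl fun w _ => hSc w z (d.prob w z)⁻¹]
    have h2 : ∀ w : Fin d.W, (if ω.1 w = z.1 then (d.Mb w z.2 : ℝ) * (d.prob w z)⁻¹ else 0)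
        = if ω.1 w = z.1 then
            ((if z.2 then m1 else m0 : ℕ) : ℝ) *
              ((d.Wa z.1 : ℝ)/(d.W : ℝ) * (((if z.2 then m1 else m0 : ℕ) : ℝ)/((m0:ℝ)+m1)))⁻¹
          else 0 := by
      intro w
      rw [hMb w z.2, Design.prob, Design.p, Design.q, hMb w z.2, hMw w]
    rw [Finset.sum_congr rfl fun w _ => h2 w, sumConstA, hNval]
    have hmb := hmbR0 z.2
    revert hmb
    generalize ((if z.2 then m1 else m0 : ℕ) : ℝ) = mb
    intro hmb
    have hW' : ((d.W0:ℝ) + d.W1) ≠ 0 := by exact_mod_cast hWR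
    field_simp
    exact div_self (hWa0 z.1)
  have hYhaj : ∀ z, d.Yhaj ω z = d.Yht ω z := fun z => by
    rw [Design.Yhaj, honeHt, div_one]
  have hVhaj : d.Vhaj ω = d.Vht ω := by
    ext z z'
    simp only [Design.Vhaj, Design.Vht, Matrix.of_apply, Design.ShajHat, Design.ShtHat]
    by_cases hzz : z.1 = z'.1
    · rw [if_pos hzz, if_pos hzz]
      congr 2
      apply Finset.sum_congr rfl
      intro w _
      by_cases h : ω.1 w = z.1
      · rw [if_pos h, if_pos h, halpha w, hYhaj, hYhaj]
        ring
      · rw [if_neg h, if_neg h]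
    · rw [if_neg hzz, if_neg hzz]
  refine ⟨hVhaj, ?_⟩
  intro Qu hQs
  have G2 : gram (d.Dunit ω) (fun _ => (1:ℝ))
      = Matrix.diagonal (fun z : T => (d.Wa z.1 : ℝ) * ((if z.2 then m1 else m0 : ℕ) : ℝ)) := by
    ext z z'
    simp only [gram, Matrix.of_apply, one_mul, Design.Dunit]
    rw [← Finset.univ_sigma_univ, Finset.sum_sigma]
    by_cases hzz : z = z'
    · subst hzz
      rw [Matrix.diagonal_apply_eq]
      have hw : ∀ w : Fin d.W,
          (∑ s, (if d.Z ω w s = z then (1:ℝ) else 0) * (if d.Z ω w s = z then (1:ℝ) else 0))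
            = if ω.1 w = z.1 then ((if z.2 then m1 else m0 : ℕ) : ℝ) else 0 := by
        intro w
        have h1 : ∀ s, ((if d.Z ω w s = z then (1:ℝ) else 0) * (if d.Z ω w s = z then (1:ℝ) else 0))
            = if d.Z ω w s = z then (1:ℝ) else 0 := by
          intro s
          by_cases h : d.Z ω w s = z <;> simp [h]
        rw [Finset.sum_congr rfl fun s _ => h1 s, hSc w z 1, hMb w z.2, mul_one]
      rw [Finset.sum_congr rfl fun w _ => hw w, sumConstA]
    · rw [Matrix.diagonal_apply_ne _ hzz]
      apply Finset.sum_eq_zero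
      intro w _
      apply Finset.sum_eq_zero
      intro s _
      by_cases h1 : d.Z ω w s = z
      · by_cases h2 : d.Z ω w s = z'
        · exact absurd (h1.symm.trans h2) hzz
        · simp [h2]
      · simp [h1]
  have hginv2 : (gram (d.Dunit ω) (fun _ => (1:ℝ)))⁻¹
      = Matrix.diagonal (fun z : T =>
          ((d.Wa z.1 : ℝ) * ((if z.2 then m1 else m0 : ℕ) : ℝ))⁻¹) := by
    rw [G2, dinv _ (fun z => mul_ne_zero (hWa0 z.1) (hmbR0 z.2))]
  have hbu : lsCoef (d.Dunit ω) (fun _ => (1:ℝ)) (d.Yv ω) = d.Yht ω := by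
    funext z
    rw [lsCoef, hginv2, Matrix.mulVec_diagonal, hYht z]
    have hv : (∑ i : d.Idx, (1:ℝ) * d.Dunit ω i z * d.Yv ω i)
        = ((if z.2 then m1 else m0 : ℕ) : ℝ) *
            ∑ w, (if ω.1 w = z.1 then d.Yw ω w z else 0) := by
      rw [← Finset.univ_sigma_univ, Finset.sum_sigma, Finset.mul_sum]
      apply Finset.sum_congr rfl
      intro w _
      have h1 : ∀ s : Fin (d.M w), (1:ℝ) * d.Dunit ω ⟨w, s⟩ z * d.Yv ω ⟨w, s⟩
          = if d.Z ω w s = z then d.Yobs ω w s else 0 := by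
        intro s
        simp only [Design.Dunit, Matrix.of_apply, Design.Yv, one_mul]
        by_cases h : d.Z ω w s = z <;> simp [h]
      rw [Finset.sum_congr rfl fun s _ => h1 s, hSb w z, hMb w z.2]
      by_cases h : ω.1 w = z.1
      · rw [if_pos h, if_pos h]
      · rw [if_neg h, if_neg h, mul_zero]
    rw [hv]
    have hUw : (∑ w, (if ω.1 w = z.1 then d.Uw ω w z else 0))
        = ∑ w, (if ω.1 w = z.1 then d.Yw ω w z else 0) := by
      apply Finset.sum_congr rfl
      intro w _
      by_cases h : ω.1 w = z.1
      · rw [if_pos h, if_pos h, Design.Uw, halpha w, one_mul]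
      · rw [if_neg h, if_neg h]
    rw [hUw]
    generalize (∑ w, (if ω.1 w = z.1 then d.Yw ω w z else 0)) = S
    rw [mul_inv]
    linear_combination ((d.Wa z.1 : ℝ))⁻¹ * S * (inv_mul_cancel₀ (hmbR0 z.2))
  have heU : ∀ (w : Fin d.W) (s : Fin (d.M w)),
      d.eUnit ω w s = d.Yobs ω w s - d.Yht ω (d.Z ω w s) := by
    intro w s
    rw [Design.eUnit, lsResid, hbu]
    congr 1
    simp only [Design.Dunit, Matrix.of_apply, Design.Yv]
    exact sumT (d.Z ω w s) (d.Yht ω)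
  have hPu : ∀ w, d.PunitBlock ω w = Matrix.of (fun s s' : Fin (d.M w) =>
      if ω.2 w s = ω.2 w s' then
        ((d.Wa (ω.1 w) : ℝ) * ((if ω.2 w s then m1 else m0 : ℕ) : ℝ))⁻¹ else 0) := by
    intro w
    rw [Design.PunitBlock, hginv2]
    ext s s'
    rw [Matrix.mul_apply]
    simp only [Matrix.mul_diagonal, Matrix.transpose_apply, Design.DunitBlock,
      Matrix.of_apply, Design.Dunit]
    by_cases hss : ω.2 w s = ω.2 w s'
    · rw [if_pos hss]
      have hZe : d.Z ω w s' = d.Z ω w s := by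
        show (ω.1 w, ω.2 w s') = (ω.1 w, ω.2 w s)
        rw [hss]
      rw [Finset.sum_eq_single (d.Z ω w s)]
      · simp [hZe, Design.Z, hss]
      · intro z _ hz
        simp [Ne.symm hz]
      · intro h
        exact absurd (Finset.mem_univ _) h
    · rw [if_neg hss]
      apply Finset.sum_eq_zero
      intro z _
      by_cases h1 : d.Z ω w s = z
      · by_cases h2 : d.Z ω w s' = z
        · exact absurd (congrArg Prod.snd (h1.trans h2.symm)) hss
        · simp [h2]
      · simp [h1]
  have hPPu : ∀ w, d.PunitBlock ω w * d.PunitBlock ω w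
      = ((d.Wa (ω.1 w) : ℝ))⁻¹ • d.PunitBlock ω w := by
    intro w
    rw [hPu w]
    ext s s'
    rw [Matrix.mul_apply]
    simp only [Matrix.of_apply, Matrix.smul_apply, smul_eq_mul]
    by_cases hss : ω.2 w s = ω.2 w s'
    · rw [if_pos hss]
      have h1 : ∀ t : Fin (d.M w),
          ((if ω.2 w s = ω.2 w t then
              ((d.Wa (ω.1 w) : ℝ) * ((if ω.2 w s then m1 else m0 : ℕ) : ℝ))⁻¹ else 0) *
            (if ω.2 w t = ω.2 w s' then
              ((d.Wa (ω.1 w) : ℝ) * ((if ω.2 w t then m1 else m0 : ℕ) : ℝ))⁻¹ else 0))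
          = if ω.2 w t = ω.2 w s then
              (((d.Wa (ω.1 w) : ℝ) * ((if ω.2 w s then m1 else m0 : ℕ) : ℝ))⁻¹) ^ 2 else 0 := by
        intro t
        by_cases h : ω.2 w t = ω.2 w s
        · rw [if_pos h.symm, if_pos (h.trans hss), if_pos h, h]
          ring
        · rw [if_neg (fun hh => h hh.symm), zero_mul, if_neg h]
      rw [Finset.sum_congr rfl fun t _ => h1 t, sumConstB w (ω.2 w s) _, hMb w (ω.2 w s)]
      have h4 := hWa0 (ω.1 w)
      have h5 := hmbR0 (ω.2 w s)
      field_simp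
    · rw [if_neg hss, mul_zero]
      apply Finset.sum_eq_zero
      intro t _
      by_cases h1 : ω.2 w s = ω.2 w t
      · rw [if_pos h1, if_neg (fun h2 => hss (h1.trans h2)), mul_zero]
      · rw [if_neg h1, zero_mul]
  have hxu : ∀ (w : Fin d.W) (b : Bool),
      (d.PunitBlock ω w).mulVec (fun s => if ω.2 w s = b then (1:ℝ) else 0)
        = ((d.Wa (ω.1 w) : ℝ))⁻¹ • (fun s => if ω.2 w s = b then (1:ℝ) else 0) := by
    intro w b
    rw [hPu w]
    funext s
    show (Matrix.of _ : Matrix (Fin (d.M w)) (Fin (d.M w)) ℝ) s ⬝ᵥ _ = _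
    simp only [Matrix.of_apply, Pi.smul_apply, smul_eq_mul, dotProduct]
    by_cases hsb : ω.2 w s = b
    · rw [if_pos hsb]
      have h1 : ∀ t : Fin (d.M w),
          ((if ω.2 w s = ω.2 w t then
              ((d.Wa (ω.1 w) : ℝ) * ((if ω.2 w s then m1 else m0 : ℕ) : ℝ))⁻¹ else 0) *
            (if ω.2 w t = b then (1:ℝ) else 0))
          = if ω.2 w t = b then
              ((d.Wa (ω.1 w) : ℝ) * ((if b then m1 else m0 : ℕ) : ℝ))⁻¹ else 0 := by
        intro t
        by_cases h : ω.2 w t = b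
        · rw [if_pos (by rw [hsb, h]), if_pos h, if_pos h, hsb, mul_one]
        · rw [if_neg h, if_neg h, mul_zero]
      rw [Finset.sum_congr rfl fun t _ => h1 t, sumConstB w b _, hMb w b]
      rw [mul_one]
      have h4 := hWa0 (ω.1 w)
      have h5 := hmbR0 b
      field_simp
    · rw [if_neg hsb, mul_zero]
      apply Finset.sum_eq_zero
      intro t _
      by_cases h : ω.2 w t = b
      · rw [if_neg (fun hh : ω.2 w s = ω.2 w t => hsb (hh.trans h)), zero_mul]
      · rw [if_neg h, mul_zero]
  have hchi : ∀ (w : Fin d.W) (z : T), ω.1 w = z.1 →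
      ((fun s => if ω.2 w s = z.2 then (1:ℝ) else 0) ⬝ᵥ d.eUnit ω w)
        = (d.Mb w z.2 : ℝ) * (d.Yw ω w z - d.Yht ω z) := by
    intro w z h
    have step : ∀ s : Fin (d.M w), (if ω.2 w s = z.2 then (1:ℝ) else 0) * d.eUnit ω w s
        = (if d.Z ω w s = z then d.Yobs ω w s else 0)
          - (if ω.2 w s = z.2 then d.Yht ω z else 0) := by
      intro s
      rw [heU w s]
      by_cases hb : ω.2 w s = z.2
      · have hzz : d.Z ω w s = z := by
          show (ω.1 w, ω.2 w s) = z
          rw [h, hb]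
        rw [if_pos hb, if_pos hzz, if_pos hb, one_mul, hzz]
      · have hzz : ¬ d.Z ω w s = z := fun hh => hb (congrArg Prod.snd hh)
        rw [if_neg hb, if_neg hzz, if_neg hb, zero_mul, sub_zero]
    show (∑ s, (if ω.2 w s = z.2 then (1:ℝ) else 0) * d.eUnit ω w s) = _
    rw [Finset.sum_congr rfl fun s _ => step s, Finset.sum_sub_distrib, hSb w z,
      if_pos h, sumConstB w z.2 (d.Yht ω z)]
    ring
  have huu : ∀ (w : Fin d.W) (z : T),
      ((d.DunitBlock ω w)ᵀ.mulVec ((Qu w)⁻¹.mulVec (d.eUnit ω w))) z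
        = if ω.1 w = z.1
          then (Real.sqrt (1 - (d.Wa (ω.1 w) : ℝ)⁻¹))⁻¹ *
            ((d.Mb w z.2 : ℝ) * (d.Yw ω w z - d.Yht ω z)) else 0 := by
    intro w z
    have hLHS : ((d.DunitBlock ω w)ᵀ.mulVec ((Qu w)⁻¹.mulVec (d.eUnit ω w))) z
        = (fun s => d.DunitBlock ω w s z) ⬝ᵥ ((Qu w)⁻¹.mulVec (d.eUnit ω w)) := rfl
    by_cases h : ω.1 w = z.1
    · have hxeq : (fun s => d.DunitBlock ω w s z)
          = (fun s => if ω.2 w s = z.2 then (1:ℝ) else 0) := by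
        funext s
        simp only [Design.DunitBlock, Matrix.of_apply, Design.Dunit]
        apply if_congr _ rfl rfl
        constructor
        · intro hzz; exact congrArg Prod.snd hzz
        · intro hb
          show (ω.1 w, ω.2 w s) = z
          rw [h, hb]
      rw [hLHS, hxeq, SPaux.key (Qu w) (d.PunitBlock ω w) (hQs w).1 (hQs w).2
        ((d.Wa (ω.1 w) : ℝ))⁻¹ (hcW (ω.1 w)) (hPPu w) _ (hxu w z.2) (d.eUnit ω w),
        hchi w z h, if_pos h]
    · rw [hLHS, if_neg h]
      have hx0 : (fun s => d.DunitBlock ω w s z) = 0 := by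
        funext s
        simp only [Design.DunitBlock, Matrix.of_apply, Design.Dunit]
        rw [if_neg (fun hzz => h (congrArg Prod.fst hzz))]
        rfl
      rw [hx0, zero_dotProduct]
  refine Eq.trans ?_ rfl
  ext z z'
  rw [Design.Vols2, hginv2, Matrix.mul_diagonal, Matrix.diagonal_mul, Matrix.of_apply]
  simp only [Design.Vht, Matrix.of_apply, Design.ShtHat]
  by_cases hzz : z.1 = z'.1
  · rw [if_pos hzz]
    have h2 : (Real.sqrt (1 - (d.Wa z.1 : ℝ)⁻¹))⁻¹ * (Real.sqrt (1 - (d.Wa z.1 : ℝ)⁻¹))⁻¹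
        = (1 - (d.Wa z.1 : ℝ)⁻¹)⁻¹ := by
      rw [← mul_inv, Real.mul_self_sqrt (hl0 z.1)]
    have hsum : (∑ w, ((d.DunitBlock ω w)ᵀ.mulVec ((Qu w)⁻¹.mulVec (d.eUnit ω w))) z *
          ((d.DunitBlock ω w)ᵀ.mulVec ((Qu w)⁻¹.mulVec (d.eUnit ω w))) z')
        = (1 - (d.Wa z.1 : ℝ)⁻¹)⁻¹ *
            (((if z.2 then m1 else m0 : ℕ) : ℝ) * ((if z'.2 then m1 else m0 : ℕ) : ℝ)) *
            ∑ w, (if ω.1 w = z.1 then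
              (d.Yw ω w z - d.Yht ω z) * (d.Yw ω w z' - d.Yht ω z') else 0) := by
      rw [Finset.mul_sum]
      apply Finset.sum_congr rfl
      intro w _
      rw [huu w z, huu w z', hMb w z.2, hMb w z'.2]
      by_cases h : ω.1 w = z.1
      · rw [if_pos h, if_pos (h.trans hzz), mul_ite, mul_zero, if_pos h, h]
        linear_combination (((if z.2 then m1 else m0 : ℕ) : ℝ) * (d.Yw ω w z - d.Yht ω z) *
          (((if z'.2 then m1 else m0 : ℕ) : ℝ) * (d.Yw ω w z' - d.Yht ω z'))) * h2
      · rw [if_neg h, zero_mul, if_neg h, mul_zero]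
    have hsum2 : (∑ w, (if ω.1 w = z.1 then
            (d.alpha w * d.Yw ω w z - d.Yht ω z) * (d.alpha w * d.Yw ω w z' - d.Yht ω z')
          else 0))
        = ∑ w, (if ω.1 w = z.1 then
            (d.Yw ω w z - d.Yht ω z) * (d.Yw ω w z' - d.Yht ω z') else 0) := by
      apply Finset.sum_congr rfl
      intro w _
      by_cases h : ω.1 w = z.1
      · rw [if_pos h, if_pos h, halpha w, one_mul, one_mul]
      · rw [if_neg h, if_neg h]
    rw [hsum, hsum2, ← hzz]
    generalize (∑ w, (if ω.1 w = z.1 then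
        (d.Yw ω w z - d.Yht ω z) * (d.Yw ω w z' - d.Yht ω z') else 0)) = S
    have hlam : 1 - (d.Wa z.1 : ℝ)⁻¹ = ((d.Wa z.1 : ℝ) - 1) / (d.Wa z.1 : ℝ) := by
      rw [eq_div_iff (hWa0 z.1), sub_mul, one_mul, inv_mul_cancel₀ (hWa0 z.1)]
    rw [hlam, inv_div]
    have h4 := hWa0 z.1
    have h5 := hWa1 z.1
    have h6 := hmbR0 z.2
    have h7 := hmbR0 z'.2
    field_simp
  · rw [if_neg hzz]
    have hsum0 : (∑ w, ((d.DunitBlock ω w)ᵀ.mulVec ((Qu w)⁻¹.mulVec (d.eUnit ω w))) z *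
          ((d.DunitBlock ω w)ᵀ.mulVec ((Qu w)⁻¹.mulVec (d.eUnit ω w))) z') = 0 := by
      apply Finset.sum_eq_zero
      intro w _
      rw [huu w z, huu w z']
      by_cases h1 : ω.1 w = z.1
      · rw [if_neg (fun h2 => hzz (h1.symm.trans h2)), mul_zero]
      · rw [if_neg h1, zero_mul]
    rw [hsum0, mul_zero, zero_mul]



end SplitPlotPaper
end
end
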